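/- Let G be an infinite group and W ⊆ G such that G \ W is infinite and W contains a subgroup H of G of finite index in G with H infinite. Then W admits a minimal asymptotic complement and a minimal complement in G. -/

import Mathlib

open Pointwise

def IsAsympCompl {G : Type*} [Group G] (W C : Set G) : Prop :=
  C.Nonempty ∧ ((Set.univ : Set G) \ (W * C)).Finite

def IsMinAsympCompl {G : Type*} [Group G] (W C : Set G) : Prop :=
  IsAsympCompl W C ∧ ∀ c ∈ C, ¬ IsAsympCompl W (C \ {c})

def IsCompl' {G : Type*} [Group G] (W C : Set G) : Prop :=
  C.Nonempty ∧ W * C = Set.univ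

def IsMinCompl {G : Type*} [Group G] (W C : Set G) : Prop :=
  IsCompl' W C ∧ ∀ c ∈ C, ¬ IsCompl' W (C \ {c})

lemma exists_min_aux {α : Type*} (P : Set α → Prop) (C : Set α) (hC : C.Finite)
    (hP : P C) : ∃ C', C' ⊆ C ∧ P C' ∧ ∀ c ∈ C', ¬ P (C' \ {c}) := by
  obtain ⟨n, hn⟩ : ∃ n, C.ncard = n := ⟨_, rfl⟩
  induction n using Nat.strong_induction_on generalizing C with
  | _ n ih =>
    by_cases h : ∀ c ∈ C, ¬ P (C \ {c})
    · exact ⟨C, subset_rfl, hP, h⟩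
    · push_neg at h
      obtain ⟨c, hc, hPc⟩ := h
      have hlt : (C \ {c}).ncard < n := by
        subst hn; exact Set.ncard_diff_singleton_lt_of_mem hc hC
      obtain ⟨C', hsub, hP', hmin⟩ :=
        ih _ hlt (C \ {c}) (hC.subset Set.diff_subset) hPc rfl
      exact ⟨C', hsub.trans Set.diff_subset, hP', hmin⟩

theorem stmt_7 {G : Type*} [Group G] [Infinite G] (W : Set G)
    (hWc : ((Set.univ : Set G) \ W).Infinite)
    (H : Subgroup G) (hfi : H.FiniteIndex) (hHinf : (H : Set G).Infinite)
    (hHW : (H : Set G) ⊆ W) :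
    (∃ C : Set G, IsMinAsympCompl W C) ∧ ∃ C : Set G, IsMinCompl W C := by
  classical
  -- a finite complement from a right transversal of H
  set C : Set G := Set.range (fun q : G ⧸ H => (Quotient.out q)⁻¹) with hCdef
  have hfin : C.Finite := Set.finite_range _
  have hcover : W * C = Set.univ := by
    apply Set.eq_univ_of_forall
    intro g
    have h1 : QuotientGroup.mk (Quotient.out (QuotientGroup.mk (s := H) g⁻¹))
        = QuotientGroup.mk (s := H) g⁻¹ := Quotient.out_eq' _
    set r := Quotient.out (QuotientGroup.mk (s := H) g⁻¹) with hr
    have h2 : r⁻¹ * g⁻¹ ∈ H := by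
      rw [← QuotientGroup.eq (s := H)] at *
      exact h1
    -- g = (r⁻¹ * g⁻¹)⁻¹ * r⁻¹
    have hg : g = (r⁻¹ * g⁻¹)⁻¹ * r⁻¹ := by group
    refine hg ▸ Set.mul_mem_mul (hHW ?_) ⟨_, rfl⟩
    exact H.inv_mem h2
  have hne : C.Nonempty := ⟨_, ⟨QuotientGroup.mk 1, rfl⟩⟩
  constructor
  · have hac : IsAsympCompl W C := ⟨hne, by rw [hcover]; simp⟩
    obtain ⟨C', _, hP', hmin⟩ := exists_min_aux (IsAsympCompl W) C hfin hac
    exact ⟨C', hP', hmin⟩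
  · obtain ⟨C', _, hP', hmin⟩ := exists_min_aux (IsCompl' W) C hfin ⟨hne, hcover⟩
    exact ⟨C', hP', hmin⟩
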